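/- arXiv:0810.1437 — 4 statements merged into one kernel-verified Lean document; each statement's English description precedes it below -/
import Mathlib

section
/- Let C be a cycle of length 11 in a graph G that has no 5-cycles, no 7-cycles, and no adjacent triangles, and suppose some edge uv of C lies on a triangle uvx with x not on C. Then x has no neighbor on C other than u and v. -/
open SimpleGraph

/-- `G` contains a cycle of length `n`. -/
def SimpleGraph.HasCycleLength {V : Type*} (G : SimpleGraph V) (n : ℕ) : Prop :=
  ∃ (v : V) (c : G.Walk v v), c.IsCycle ∧ c.length = n

/-- No two triangles of `G` share an edge: two triangles on a common edge `uv`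
must have the same apex. -/
def SimpleGraph.NoAdjacentTriangles {V : Type*} (G : SimpleGraph V) : Prop :=
  ∀ u v x y : V, G.Adj u v → G.Adj u x → G.Adj v x → G.Adj u y → G.Adj v y → x = y

/-- The consecutive pairs of a list, read cyclically. -/
def cyclicPairs {V : Type*} (l : List V) : List (V × V) := l.zip (l.rotate 1)

/-- A (combinatorial) plane graph: a finite connected simple graph together with a
finite set of faces, each face being given by its boundary closed walk, such that
every edge lies on exactly two face-incidences and Euler's formula holds. -/
structure PlaneGraph where
  V : Type
  [decV : DecidableEq V]
  [fintV : Fintype V]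
  G : SimpleGraph V
  F : Type
  [fintF : Fintype F]
  /-- the unbounded (outer) face -/
  outer : F
  /-- the closed boundary walk of each face, as a cyclic list of vertices -/
  boundary : F → List V
  boundary_adj : ∀ f, ∀ p ∈ cyclicPairs (boundary f), G.Adj p.1 p.2
  edge_faces : ∀ e ∈ G.edgeSet,
    (∑ f : F, ((cyclicPairs (boundary f)).map (fun p => Sym2.mk p.1 p.2)).count e) = 2
  connected : G.Connected
  euler : (Fintype.card V : ℤ) - (G.edgeSet.ncard : ℤ) + (Fintype.card F : ℤ) = 2

attribute [instance] PlaneGraph.decV PlaneGraph.fintV PlaneGraph.fintF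

/-- `|V(G)| + |E(G)|`. -/
noncomputable def PlaneGraph.size (P : PlaneGraph) : ℕ := Nat.card P.V + P.G.edgeSet.ncard

/-- The degree of a face: the length of its boundary walk. -/
def PlaneGraph.faceDegree (P : PlaneGraph) (f : P.F) : ℕ := (P.boundary f).length

/-- The (multi)set of edges on the boundary of a face. -/
def PlaneGraph.faceEdges (P : PlaneGraph) (f : P.F) : List (Sym2 P.V) :=
  (cyclicPairs (P.boundary f)).map (fun p => Sym2.mk p.1 p.2)

/-- The class 𝓖: no 5-cycles, no 7-cycles, no adjacent triangles. -/
def PlaneGraph.Good (P : PlaneGraph) : Prop :=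
  ¬ P.G.HasCycleLength 5 ∧ ¬ P.G.HasCycleLength 7 ∧ P.G.NoAdjacentTriangles

/-- A map `φ` is a proper 3-coloring of (the boundary of) the face `f`. -/
def PlaneGraph.ProperOn (P : PlaneGraph) (φ : P.V → Fin 3) (f : P.F) : Prop :=
  ∀ p ∈ cyclicPairs (P.boundary f), φ p.1 ≠ φ p.2

/-- The precoloring `φ` of the face `f` extends to a proper 3-coloring of the
whole graph. -/
def PlaneGraph.Extends (P : PlaneGraph) (φ : P.V → Fin 3) (f : P.F) : Prop :=
  ∃ ψ : P.V → Fin 3, (∀ a b, P.G.Adj a b → ψ a ≠ ψ b) ∧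
    ∀ v ∈ P.boundary f, ψ v = φ v

/-- A special 11-face: its boundary is an 11-cycle, it is adjacent to a triangle
sharing one edge with it, no vertex off the boundary has three or more neighbors
on it (no claw-center), and no adjacent pair of vertices off the boundary has
four or more neighbors on it in total (no d-claw-center). -/
def PlaneGraph.SpecialFace (P : PlaneGraph) (f : P.F) : Prop :=
  (P.boundary f).Nodup ∧ (P.boundary f).length = 11 ∧
  (∃ x u v, x ∉ P.boundary f ∧ Sym2.mk u v ∈ P.faceEdges f ∧
    P.G.Adj x u ∧ P.G.Adj x v) ∧
  (∀ x, x ∉ P.boundary f → {v | v ∈ P.boundary f ∧ P.G.Adj x v}.ncard ≤ 2) ∧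
  (∀ x y, x ∉ P.boundary f → y ∉ P.boundary f → P.G.Adj x y →
    {v | v ∈ P.boundary f ∧ P.G.Adj x v}.ncard +
      {v | v ∈ P.boundary f ∧ P.G.Adj y v}.ncard ≤ 3)

/-- A face of the kind considered in the main theorem: a 3-face or a 9-face
bounded by a cycle, or a special 11-face. -/
def PlaneGraph.AllowedFace (P : PlaneGraph) (f : P.F) : Prop :=
  ((P.boundary f).Nodup ∧ ((P.boundary f).length = 3 ∨ (P.boundary f).length = 9))
    ∨ P.SpecialFace f

/-- `(P, f, φ)` is a counterexample to the extension theorem. -/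
def PlaneGraph.Counterexample (P : PlaneGraph) (f : P.F) (φ : P.V → Fin 3) : Prop :=
  P.Good ∧ (P.G.HasCycleLength 4 ∨ P.G.HasCycleLength 6) ∧ P.AllowedFace f ∧
    P.ProperOn φ f ∧ ¬ P.Extends φ f

/-- A counterexample minimizing `|V| + |E|`. -/
def PlaneGraph.MinimalCounterexample (P : PlaneGraph) (f : P.F) (φ : P.V → Fin 3) :
    Prop :=
  P.Counterexample f φ ∧
    ∀ (Q : PlaneGraph) (g : Q.F) (ψ : Q.V → Fin 3),
      Q.Counterexample g ψ → P.size ≤ Q.size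

/-- The boundary cycle of `f` has no chord: any edge between boundary vertices
is a boundary edge. -/
def PlaneGraph.Chordless (P : PlaneGraph) (f : P.F) : Prop :=
  ∀ u v, u ∈ P.boundary f → v ∈ P.boundary f → P.G.Adj u v →
    Sym2.mk u v ∈ P.faceEdges f

/-- 2-connectedness. -/
def SimpleGraph.TwoConnected {V : Type*} (G : SimpleGraph V) : Prop :=
  3 ≤ Nat.card V ∧ ∀ v : V, ((⊤ : G.Subgraph).deleteVerts {v}).coe.Connected

lemma my_last_edge {V : Type} {G : SimpleGraph V} {b u v : V} (p : G.Walk b u) (hvu : v ≠ u)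
    (hp : p.IsPath) (he : s(v, u) ∈ p.edges) :
    ∃ (q : G.Walk b v) (h : G.Adj v u), p = q.concat h := by
  induction p with
  | nil => simp at he
  | @cons b c u hadj p' ih =>
    rw [Walk.edges_cons, List.mem_cons] at he
    rcases he with he | he
    · rw [Sym2.eq_iff] at he
      rcases he with ⟨hv, hu⟩ | ⟨hv, hu⟩
      · subst hv; subst hu
        have hnil : p' = Walk.nil := Walk.isPath_iff_eq_nil.mp hp.of_cons
        subst hnil
        exact ⟨Walk.nil, hadj, by simp [Walk.concat]⟩
      · exfalso
        subst hv; subst hu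
        have hnil := Walk.isPath_iff_eq_nil.mp hp
        simp at hnil
    · obtain ⟨q, h, hq⟩ := ih hvu hp.of_cons he
      exact ⟨Walk.cons hadj q, h, by rw [hq, Walk.concat_cons]⟩

lemma my_isPath_concat {V : Type} {G : SimpleGraph V} {a b c : V} {p : G.Walk a b}
    (hp : p.IsPath) (h : G.Adj b c) (hc : c ∉ p.support) : (p.concat h).IsPath := by
  rw [Walk.isPath_def, Walk.support_concat]
  simp only [List.concat_eq_append, List.nodup_append, List.nodup_cons, List.not_mem_nil,
    not_false_iff, List.nodup_nil, and_true, true_and]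
  exact ⟨hp.support_nodup, fun x hx y hy hxy => hc (by rw [List.mem_singleton] at hy; subst hy; subst hxy; exact hx)⟩

lemma my_mem_concat {α : Type*} {x a : α} {l : List α} : x ∈ l.concat a ↔ x ∈ l ∨ x = a := by
  simp

lemma my_core {V : Type} (G : SimpleGraph V)
    (h5 : ¬ G.HasCycleLength 5) (h7 : ¬ G.HasCycleLength 7)
    (hT : G.NoAdjacentTriangles)
    {u v x : V} (huv : G.Adj u v) (p : G.Walk v u)
    (hp : p.IsPath) (hne : s(u, v) ∉ p.edges) (hlen : p.length = 10)
    (hxs : x ∉ p.support) (hxu : G.Adj x u) (hxv : G.Adj x v) :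
    ∀ w ∈ p.support, G.Adj x w → w = u ∨ w = v := by
  classical
  intro w hw hxw
  by_contra hcon
  push_neg at hcon
  obtain ⟨hwu, hwv⟩ := hcon
  -- x is distinct from everything on p
  have hxne : ∀ y ∈ p.support, x ≠ y := fun y hy e => hxs (e ▸ hy)
  have hxuNe : x ≠ u := hxne u p.end_mem_support
  have hxvNe : x ≠ v := hxne v p.start_mem_support
  have hxwNe : x ≠ w := hxne w hw
  set q := p.takeUntil w hw with hqdef
  set r := p.dropUntil w hw with hrdef
  have hspec : q.append r = p := p.take_spec hw
  have hq : q.IsPath := hp.takeUntil hw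
  have hr : r.IsPath := hp.dropUntil hw
  have hxq : x ∉ q.support := fun h => hxs (p.support_takeUntil_subset hw h)
  have hxr : x ∉ r.support := fun h => hxs (p.support_dropUntil_subset hw h)
  have hlensum : q.length + r.length = 10 := by
    have := congrArg Walk.length hspec
    rwa [Walk.length_append, hlen] at this
  have hk1 : 1 ≤ q.length := by
    rcases Nat.eq_zero_or_pos q.length with h0 | h
    · exact absurd (Walk.eq_of_length_eq_zero h0).symm hwv
    · exact h
  have hk9 : q.length ≤ 9 := by
    rcases Nat.eq_zero_or_pos r.length with h0 | h
    · exact absurd (Walk.eq_of_length_eq_zero h0) hwu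
    · omega
  -- disjointness from nodup
  have hnd : (q.support ++ r.support.tail).Nodup := by
    have := hp.support_nodup
    rw [← hspec, Walk.support_append] at this
    exact this
  rw [List.nodup_append] at hnd
  have hdisj := hnd.2.2
  have hurt : u ∈ r.support.tail := by
    have : u ∈ r.support := r.end_mem_support
    rw [Walk.mem_support_iff] at this
    exact this.resolve_left (Ne.symm hwu)
  have huq : u ∉ q.support := fun h => hdisj u h u hurt rfl
  have hvr : v ∉ r.support := by
    intro h
    rw [Walk.mem_support_iff] at h
    rcases h with h | h
    · exact hwv h.symm
    · exact hdisj v q.start_mem_support v h rfl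
  -- cycle C1 : x - v - ... - w - x, length q.length + 2
  have hP1 : (q.concat hxw.symm).IsPath := my_isPath_concat hq hxw.symm hxq
  have hE1 : ∀ y z : V, y ∉ q.support → s(y, z) ∉ (q.concat hxw.symm).edges ∨ (s(y,z) = s(w,x)) := by
    intro y z hy
    by_cases h : s(y, z) = s(w, x)
    · exact Or.inr h
    · left
      rw [Walk.edges_concat]
      intro hmem
      rcases my_mem_concat.mp hmem with hmem | hmem
      · exact hy (q.fst_mem_support_of_mem_edges hmem)
      · exact h hmem
  have hC1 : (Walk.cons hxv (q.concat hxw.symm)).IsCycle := by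
    rw [Walk.cons_isCycle_iff]
    refine ⟨hP1, ?_⟩
    rw [Walk.edges_concat]
    intro hmem
    rcases my_mem_concat.mp hmem with hmem | hmem
    · exact hxq (q.fst_mem_support_of_mem_edges hmem)
    · rw [Sym2.eq_iff] at hmem
      rcases hmem with ⟨h1, h2⟩ | ⟨h1, h2⟩
      · exact hxwNe h1
      · exact hwv h2.symm
  have hlenC1 : (Walk.cons hxv (q.concat hxw.symm)).length = q.length + 2 := by
    simp [Walk.length_concat]
  have hk35 : q.length ≠ 3 ∧ q.length ≠ 5 := by
    constructor <;> intro h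
    · exact h5 ⟨x, _, hC1, by rw [hlenC1, h]⟩
    · exact h7 ⟨x, _, hC1, by rw [hlenC1, h]⟩
  -- cycle C2 : x - w - ... - u - x, length r.length + 2 = 12 - q.length
  have hP2 : (r.concat hxu.symm).IsPath := my_isPath_concat hr hxu.symm hxr
  have hC2 : (Walk.cons hxw (r.concat hxu.symm)).IsCycle := by
    rw [Walk.cons_isCycle_iff]
    refine ⟨hP2, ?_⟩
    rw [Walk.edges_concat]
    intro hmem
    rcases my_mem_concat.mp hmem with hmem | hmem
    · exact hxr (r.fst_mem_support_of_mem_edges hmem)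
    · rw [Sym2.eq_iff] at hmem
      rcases hmem with ⟨h1, h2⟩ | ⟨h1, h2⟩
      · exact hxuNe h1
      · exact hwu h2
  have hlenC2 : (Walk.cons hxw (r.concat hxu.symm)).length = r.length + 2 := by
    simp [Walk.length_concat]
  have hk75 : r.length ≠ 3 ∧ r.length ≠ 5 := by
    constructor <;> intro h
    · exact h5 ⟨x, _, hC2, by rw [hlenC2, h]⟩
    · exact h7 ⟨x, _, hC2, by rw [hlenC2, h]⟩
  -- cycle C3 : x - u - v - ... - w - x, length q.length + 3
  have hP3 : (Walk.cons huv (q.concat hxw.symm)).IsPath := by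
    rw [Walk.cons_isPath_iff]
    refine ⟨hP1, ?_⟩
    rw [Walk.support_concat]
    intro hmem
    rcases List.mem_append.mp hmem with hmem | hmem
    · exact huq hmem
    · exact hxuNe (List.mem_singleton.mp hmem).symm
  have hC3 : (Walk.cons hxu (Walk.cons huv (q.concat hxw.symm))).IsCycle := by
    rw [Walk.cons_isCycle_iff]
    refine ⟨hP3, ?_⟩
    rw [Walk.edges_cons]
    intro hmem
    rcases List.mem_cons.mp hmem with hmem | hmem
    · rw [Sym2.eq_iff] at hmem
      rcases hmem with ⟨h1, h2⟩ | ⟨h1, h2⟩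
      · exact hxuNe h1
      · exact hxvNe h1
    · rw [Walk.edges_concat] at hmem
      rcases my_mem_concat.mp hmem with hmem | hmem
      · exact hxq (q.fst_mem_support_of_mem_edges hmem)
      · rw [Sym2.eq_iff] at hmem
        rcases hmem with ⟨h1, h2⟩ | ⟨h1, h2⟩
        · exact hxwNe h1
        · exact hwu h2.symm
  have hlenC3 : (Walk.cons hxu (Walk.cons huv (q.concat hxw.symm))).length = q.length + 3 := by
    simp [Walk.length_concat]
  have hk24 : q.length ≠ 2 ∧ q.length ≠ 4 := by
    constructor <;> intro h
    · exact h5 ⟨x, _, hC3, by rw [hlenC3, h]⟩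
    · exact h7 ⟨x, _, hC3, by rw [hlenC3, h]⟩
  -- cycle C4 : v - x - w - ... - u - v, length r.length + 3 = 13 - q.length
  have hP4r : (r.concat huv).IsPath := my_isPath_concat hr huv hvr
  have hP4 : (Walk.cons hxw (r.concat huv)).IsPath := by
    rw [Walk.cons_isPath_iff]
    refine ⟨hP4r, ?_⟩
    rw [Walk.support_concat]
    intro hmem
    rcases List.mem_append.mp hmem with hmem | hmem
    · exact hxr hmem
    · exact hxvNe (List.mem_singleton.mp hmem)
  have hC4 : (Walk.cons hxv.symm (Walk.cons hxw (r.concat huv))).IsCycle := by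
    rw [Walk.cons_isCycle_iff]
    refine ⟨hP4, ?_⟩
    rw [Walk.edges_cons]
    intro hmem
    rcases List.mem_cons.mp hmem with hmem | hmem
    · rw [Sym2.eq_iff] at hmem
      rcases hmem with ⟨h1, h2⟩ | ⟨h1, h2⟩
      · exact hxvNe h1.symm
      · exact hwv h1.symm
    · rw [Walk.edges_concat] at hmem
      rcases my_mem_concat.mp hmem with hmem | hmem
      · exact hvr (r.fst_mem_support_of_mem_edges hmem)
      · rw [Sym2.eq_iff] at hmem
        rcases hmem with ⟨h1, h2⟩ | ⟨h1, h2⟩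
        · exact huv.ne h1.symm
        · exact hxuNe h2
  have hlenC4 : (Walk.cons hxv.symm (Walk.cons hxw (r.concat huv))).length = r.length + 3 := by
    simp [Walk.length_concat]
  have hk86 : r.length ≠ 2 ∧ r.length ≠ 4 := by
    constructor <;> intro h
    · exact h5 ⟨v, _, hC4, by rw [hlenC4, h]⟩
    · exact h7 ⟨v, _, hC4, by rw [hlenC4, h]⟩
  -- triangles
  have hk1' : q.length ≠ 1 := by
    intro h
    have hvw : G.Adj v w := q.adj_of_length_eq_one h
    exact hwu (hT v x u w hxv.symm huv.symm hxu hvw hxw).symm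
  have hr1 : r.length ≠ 1 := by
    intro h
    have hwu' : G.Adj w u := r.adj_of_length_eq_one h
    exact hwv (hT u x v w hxu.symm huv hxv hwu'.symm hxw).symm
  omega

/-- If C is an 11-cycle in a graph with no 5-cycles, no
7-cycles and no adjacent triangles, and the edge uv of C lies on a triangle uvx
with x off C, then x has no neighbor on C other than u and v. -/
theorem apex_of_triangle_on_11cycle_has_no_other_neighbor
    {V : Type} (G : SimpleGraph V)
    (h5 : ¬ G.HasCycleLength 5) (h7 : ¬ G.HasCycleLength 7)
    (hT : G.NoAdjacentTriangles)
    {a : V} (c : G.Walk a a) (hc : c.IsCycle) (h11 : c.length = 11)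
    {u v x : V} (huv : Sym2.mk u v ∈ c.edges) (hx : x ∉ c.support)
    (hxu : G.Adj x u) (hxv : G.Adj x v) :
    ∀ w ∈ c.support, G.Adj x w → w = u ∨ w = v := by
  classical
  have hadj : G.Adj u v := c.adj_of_mem_edges huv
  have hu : u ∈ c.support := c.fst_mem_support_of_mem_edges huv
  set c' := c.rotate u hu with hc'def
  have hcyc : c'.IsCycle := hc.rotate hu
  have hsup : ∀ y, y ∈ c'.support ↔ y ∈ c.support := by
    intro y
    rw [hc'def, Walk.rotate, Walk.mem_support_append_iff]
    conv_rhs => rw [← c.take_spec hu]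
    rw [Walk.mem_support_append_iff]
    tauto
  have hlen' : c'.length = 11 := by
    have h1 := congrArg Walk.length (c.take_spec hu)
    rw [Walk.length_append] at h1
    rw [hc'def, Walk.rotate, Walk.length_append]
    omega
  have hedge' : s(u, v) ∈ c'.edges := (c.rotate_edges u hu).mem_iff.mpr huv
  have hnn : ¬ c'.Nil := by rw [Walk.nil_iff_length_eq]; omega
  obtain ⟨b, hub, p, hcp⟩ := Walk.not_nil_iff.mp hnn
  rw [hcp, Walk.cons_isCycle_iff] at hcyc
  obtain ⟨hpPath, hpe⟩ := hcyc
  have hlenp : p.length = 10 := by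
    rw [hcp, Walk.length_cons] at hlen'; omega
  have hsupp : ∀ y, y ∈ p.support → y ∈ c.support := by
    intro y hy
    rw [← hsup]
    rw [hcp, Walk.support_cons]
    exact List.mem_cons_of_mem _ hy
  have hxp : x ∉ p.support := fun h => hx (hsupp x h)
  rw [hcp, Walk.edges_cons] at hedge'
  rcases List.mem_cons.mp hedge' with he | he
  · -- first edge of the rotated cycle is uv
    have hbv : b = v := by
      rw [Sym2.eq_iff] at he
      rcases he with ⟨h1, h2⟩ | ⟨h1, h2⟩
      · exact h2.symm
      · exact absurd h2.symm hadj.ne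
    subst hbv
    intro w hwc hxw
    have hwc' : w ∈ c'.support := (hsup w).mpr hwc
    rw [hcp, Walk.support_cons, List.mem_cons] at hwc'
    rcases hwc' with h | h
    · exact Or.inl h
    · exact my_core G h5 h7 hT hub p hpPath hpe hlenp hxp hxu hxv w h hxw
  · -- uv is the last edge of the rotated cycle
    have hvu : v ≠ u := hadj.ne'
    have he' : s(v, u) ∈ p.edges := by rwa [Sym2.eq_swap]
    obtain ⟨q', h', hpq⟩ := my_last_edge p hvu hpPath he'
    subst hpq
    have hnd : (q'.support ++ [u]).Nodup := by
      have h2 := hpPath.support_nodup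
      rwa [Walk.support_concat] at h2
    rw [List.nodup_append] at hnd
    have hq'P : q'.IsPath := by rw [Walk.isPath_def]; exact hnd.1
    have huq' : u ∉ q'.support := fun h => hnd.2.2 u h u (List.mem_singleton.mpr rfl) rfl
    have hr'P : (Walk.cons hub q').IsPath := by
      rw [Walk.cons_isPath_iff]; exact ⟨hq'P, huq'⟩
    have hq'len : q'.length + 1 = 10 := by
      rw [Walk.length_concat] at hlenp; exact hlenp
    have hr'len : (Walk.cons hub q').length = 10 := by
      rw [Walk.length_cons]; omega
    have hne' : s(v, u) ∉ (Walk.cons hub q').edges := by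
      rw [Walk.edges_cons]
      intro hmem
      rcases List.mem_cons.mp hmem with hm | hm
      · rw [Sym2.eq_iff] at hm
        rcases hm with ⟨h1, h2⟩ | ⟨h1, h2⟩
        · exact hvu h1
        · subst h1
          have : q' = Walk.nil := Walk.isPath_iff_eq_nil.mp hq'P
          rw [this] at hq'len
          simp at hq'len
      · exact huq' (q'.snd_mem_support_of_mem_edges hm)
    have hxr' : x ∉ (Walk.cons hub q').support := by
      rw [Walk.support_cons]
      intro hmem
      rcases List.mem_cons.mp hmem with hm | hm
      · exact hx (hm ▸ hu)
      · exact hx (hsupp x (by rw [Walk.support_concat]; exact List.mem_append.mpr (Or.inl hm)))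
    have hcore := my_core G h5 h7 hT h' (Walk.cons hub q') hr'P hne' hr'len hxr' hxv hxu
    intro w hwc hxw
    have hwc' : w ∈ c'.support := (hsup w).mpr hwc
    rw [hcp, Walk.support_cons, List.mem_cons] at hwc'
    rcases hwc' with h | h
    · exact Or.inl h
    · rw [Walk.support_concat] at h
      rcases List.mem_append.mp h with h | h
      · have hres := hcore w (by rw [Walk.support_cons]; exact List.mem_cons_of_mem _ h) hxw
        exact hres.symm
      · exact Or.inl (List.mem_singleton.mp h)
end

section
/- Let G be a plane graph with no 5-cycles, no 7-cycles, and no adjacent triangles. If H is obtained from G by identifying the two diagonal vertices u and w of a 4-cycle uvwx none of whose edges lies in a triangle, then H has no adjacent triangles, and every 5-cycle of H corresponds to a 7-cycle of G and every 7-cycle of H corresponds to a 9-cycle of G passing through both u and w. -/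
open SimpleGraph

open Classical in
/-- The graph obtained from `G` by identifying the vertex `w` with the vertex
`u` (the identified vertex is `u`; the old vertex `w` becomes isolated). -/
noncomputable def SimpleGraph.identify {V : Type} (G : SimpleGraph V) (u w : V) :
    SimpleGraph V where
  Adj a b := a ≠ b ∧ ∃ a' b', G.Adj a' b' ∧
    (if a' = w then u else a') = a ∧ (if b' = w then u else b') = b
  symm := ⟨by
    rintro a b ⟨hab, a', b', h, ha, hb⟩
    exact ⟨hab.symm, b', a', h.symm, hb, ha⟩⟩
  loopless := ⟨fun a h => h.1 rfl⟩

namespace IdentAux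

variable {V : Type} {G : SimpleGraph V}

lemma mkC5 {a b c d e : V} (h1 : G.Adj a b) (h2 : G.Adj b c) (h3 : G.Adj c d)
    (h4 : G.Adj d e) (h5 : G.Adj e a)
    (hac : a ≠ c) (had : a ≠ d) (hbd : b ≠ d) (hbe : b ≠ e) (hce : c ≠ e) :
    G.HasCycleLength 5 := by
  refine ⟨a, .cons h1 (.cons h2 (.cons h3 (.cons h4 (.cons h5 .nil)))), ?_, rfl⟩
  simp [SimpleGraph.Walk.isCycle_def, SimpleGraph.Walk.isTrail_def, List.Nodup, Sym2.eq_iff]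
  aesop

lemma mkC7 {a b c d e f g : V} (h1 : G.Adj a b) (h2 : G.Adj b c) (h3 : G.Adj c d)
    (h4 : G.Adj d e) (h5 : G.Adj e f) (h6 : G.Adj f g) (h7 : G.Adj g a)
    (hac : a ≠ c) (had : a ≠ d) (hae : a ≠ e) (haf : a ≠ f)
    (hbd : b ≠ d) (hbe : b ≠ e) (hbf : b ≠ f) (hbg : b ≠ g)
    (hce : c ≠ e) (hcf : c ≠ f) (hcg : c ≠ g)
    (hdf : d ≠ f) (hdg : d ≠ g) (heg : e ≠ g) :
    G.HasCycleLength 7 := by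
  refine ⟨a, .cons h1 (.cons h2 (.cons h3 (.cons h4 (.cons h5 (.cons h6 (.cons h7 .nil)))))),
    ?_, rfl⟩
  simp [SimpleGraph.Walk.isCycle_def, SimpleGraph.Walk.isTrail_def, List.Nodup, Sym2.eq_iff]
  aesop

lemma identify_adj_iff {u w a b : V} (huw : u ≠ w) :
    (G.identify u w).Adj a b ↔ a ≠ b ∧ a ≠ w ∧ b ≠ w ∧
      (G.Adj a b ∨ (a = u ∧ G.Adj w b) ∨ (b = u ∧ G.Adj a w)) := by
  show (_ ∧ _) ↔ _
  constructor
  · rintro ⟨hab, a', b', h, ha, hb⟩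
    split_ifs at ha hb with h1 h2 h2
    · exact absurd (h1.trans h2.symm) h.ne
    · subst ha hb h1; exact ⟨hab, huw, h.ne', Or.inr (Or.inl ⟨rfl, h⟩)⟩
    · subst ha hb h2; exact ⟨hab, h1, huw, Or.inr (Or.inr ⟨rfl, h⟩)⟩
    · subst ha hb; exact ⟨hab, h1, h2, Or.inl h⟩
  · rintro ⟨hab, haw, hbw, (h | ⟨rfl, h⟩ | ⟨rfl, h⟩)⟩
    · exact ⟨hab, a, b, h, if_neg haw, if_neg hbw⟩
    · exact ⟨hab, w, b, h, if_pos rfl, if_neg hbw⟩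
    · exact ⟨hab, a, w, h, if_neg haw, if_pos rfl⟩

lemma adj_of_ne {u w a b : V} (huw : u ≠ w) (h : (G.identify u w).Adj a b)
    (ha : a ≠ u) (hb : b ≠ u) : G.Adj a b := by
  rcases (identify_adj_iff huw).1 h with ⟨-, -, -, h' | ⟨h', -⟩ | ⟨h', -⟩⟩
  · exact h'
  · exact absurd h' ha
  · exact absurd h' hb

lemma adj_left {u w b : V} (huw : u ≠ w) (h : (G.identify u w).Adj u b)
    (hb : b ≠ u) : G.Adj u b ∨ G.Adj w b := by
  rcases (identify_adj_iff huw).1 h with ⟨-, -, -, h' | ⟨-, h'⟩ | ⟨h', -⟩⟩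
  · exact Or.inl h'
  · exact Or.inr h'
  · exact absurd h' hb

lemma ne_w_left {u w a b : V} (huw : u ≠ w) (h : (G.identify u w).Adj a b) : a ≠ w :=
  ((identify_adj_iff huw).1 h).2.1

lemma ne_w_right {u w a b : V} (huw : u ≠ w) (h : (G.identify u w).Adj a b) : b ≠ w :=
  ((identify_adj_iff huw).1 h).2.2.1

lemma length_rotate [DecidableEq V] {u r : V} (c : G.Walk r r) (h : u ∈ c.support) :
    (c.rotate u h).length = c.length := by
  have h2 := congrArg Walk.length (c.take_spec h)
  rw [Walk.length_append] at h2
  simp only [Walk.rotate, Walk.length_append]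
  omega

lemma walk_decomp5 {r : V} (c : G.Walk r r) (h : c.length = 5) :
    ∃ a b d e : V, c.support = [r, a, b, d, e, r] := by
  have hlen : c.support.length = 6 := by rw [Walk.length_support, h]
  have hhead : c.support.head? = some r := by rw [c.support_eq_cons]; rfl
  have hlast : c.support.getLast? = some r := by
    rw [List.getLast?_eq_getLast (by simp), c.getLast_support]
  rcases hs : c.support with _ | ⟨x0, _ | ⟨x1, _ | ⟨x2, _ | ⟨x3, _ | ⟨x4, _ | ⟨x5, rest⟩⟩⟩⟩⟩⟩ <;>
    rw [hs] at hlen <;> simp at hlen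
  subst hlen
  rw [hs] at hhead hlast
  simp at hhead hlast
  subst hhead hlast
  exact ⟨x1, x2, x3, x4, rfl⟩

lemma walk_decomp7 {r : V} (c : G.Walk r r) (h : c.length = 7) :
    ∃ a b d e f g : V, c.support = [r, a, b, d, e, f, g, r] := by
  have hlen : c.support.length = 8 := by rw [Walk.length_support, h]
  have hhead : c.support.head? = some r := by rw [c.support_eq_cons]; rfl
  have hlast : c.support.getLast? = some r := by
    rw [List.getLast?_eq_getLast (by simp), c.getLast_support]
  rcases hs : c.support with
    _ | ⟨x0, _ | ⟨x1, _ | ⟨x2, _ | ⟨x3, _ | ⟨x4, _ | ⟨x5, _ | ⟨x6, _ | ⟨x7, rest⟩⟩⟩⟩⟩⟩⟩⟩ <;>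
    rw [hs] at hlen <;> simp at hlen
  subst hlen
  rw [hs] at hhead hlast
  simp at hhead hlast
  subst hhead hlast
  exact ⟨x1, x2, x3, x4, x5, x6, rfl⟩

variable {u v w x : V}

/-- Key lemma: there is no path u - a - b - w with a, b off the 4-cycle diagonal. -/
lemma keyL1 (h5c : ¬ G.HasCycleLength 5)
    (huv : G.Adj u v) (hvw : G.Adj v w) (hwx : G.Adj w x) (hxu : G.Adj x u)
    (huw : u ≠ w)
    (htri : ∀ t : V,
      ¬ (G.Adj u t ∧ G.Adj v t) ∧ ¬ (G.Adj v t ∧ G.Adj w t) ∧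
      ¬ (G.Adj w t ∧ G.Adj x t) ∧ ¬ (G.Adj x t ∧ G.Adj u t))
    {a b : V} (hau : a ≠ u) (haw : a ≠ w) (hbu : b ≠ u) (hbw : b ≠ w)
    (h1 : G.Adj u a) (h2 : G.Adj a b) (h3 : G.Adj w b) : False := by
  by_cases hax : a = x
  · subst hax; exact (htri b).2.2.1 ⟨h3, h2⟩
  by_cases hbx : b = x
  · subst hbx; exact (htri a).2.2.2 ⟨h2.symm, h1⟩
  by_cases hav : a = v
  · subst hav; exact (htri b).2.1 ⟨h2, h3⟩
  by_cases hbv : b = v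
  · subst hbv; exact (htri a).1 ⟨h1, h2.symm⟩
  exact h5c (mkC5 h1 h2 h3.symm hwx hxu (Ne.symm hbu) huw haw hax hbx)

/-- Key lemma: no path u - a - b - c - d - w. -/
lemma keyL2 (h5c : ¬ G.HasCycleLength 5) (h7c : ¬ G.HasCycleLength 7)
    (huv : G.Adj u v) (hvw : G.Adj v w) (hwx : G.Adj w x) (hxu : G.Adj x u)
    (huw : u ≠ w)
    (htri : ∀ t : V,
      ¬ (G.Adj u t ∧ G.Adj v t) ∧ ¬ (G.Adj v t ∧ G.Adj w t) ∧
      ¬ (G.Adj w t ∧ G.Adj x t) ∧ ¬ (G.Adj x t ∧ G.Adj u t))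
    {a b c d : V}
    (hau : a ≠ u) (haw : a ≠ w) (hbu : b ≠ u) (hbw : b ≠ w)
    (hcu : c ≠ u) (hcw : c ≠ w) (hdu : d ≠ u) (hdw : d ≠ w)
    (hac : a ≠ c) (had : a ≠ d) (hbd : b ≠ d)
    (h1 : G.Adj u a) (h2 : G.Adj a b) (h3 : G.Adj b c) (h4 : G.Adj c d)
    (h5 : G.Adj w d) : False := by
  by_cases hxa : x = a
  · subst hxa
    exact h5c (mkC5 h2 h3 h4 h5.symm hwx hac had hbd hbw hcw)
  by_cases hxb : x = b
  · subst hxb; exact (htri a).2.2.2 ⟨h2.symm, h1⟩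
  by_cases hxc : x = c
  · subst hxc; exact (htri d).2.2.1 ⟨h5, h4⟩
  by_cases hxd : x = d
  · subst hxd
    exact h5c (mkC5 h1 h2 h3 h4 hxu (Ne.symm hbu) (Ne.symm hcu) hac had hbd)
  exact h7c (mkC7 h1 h2 h3 h4 h5.symm hwx hxu (Ne.symm hbu) (Ne.symm hcu)
    (Ne.symm hdu) huw hac had haw (fun h => hxa h.symm) hbd hbw
    (fun h => hxb h.symm) hcw (fun h => hxc h.symm) (fun h => hxd h.symm))

set_option maxHeartbeats 2000000 in
/-- Key lemma: a path u - a - b - c - d - e - f - w yields a 9-cycle through u and w. -/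
lemma keyL3 (h5c : ¬ G.HasCycleLength 5) (h7c : ¬ G.HasCycleLength 7)
    (huv : G.Adj u v) (hvw : G.Adj v w) (hwx : G.Adj w x) (hxu : G.Adj x u)
    (huw : u ≠ w)
    (htri : ∀ t : V,
      ¬ (G.Adj u t ∧ G.Adj v t) ∧ ¬ (G.Adj v t ∧ G.Adj w t) ∧
      ¬ (G.Adj w t ∧ G.Adj x t) ∧ ¬ (G.Adj x t ∧ G.Adj u t))
    {a b c d e f : V}
    (hau : a ≠ u) (haw : a ≠ w) (hbu : b ≠ u) (hbw : b ≠ w)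
    (hcu : c ≠ u) (hcw : c ≠ w) (hdu : d ≠ u) (hdw : d ≠ w)
    (heu : e ≠ u) (hew : e ≠ w) (hfu : f ≠ u) (hfw : f ≠ w)
    (hac : a ≠ c) (had : a ≠ d) (hae : a ≠ e) (haf : a ≠ f)
    (hbd : b ≠ d) (hbe : b ≠ e) (hbf : b ≠ f)
    (hce : c ≠ e) (hcf : c ≠ f) (hdf : d ≠ f)
    (h1 : G.Adj u a) (h2 : G.Adj a b) (h3 : G.Adj b c) (h4 : G.Adj c d)
    (h5 : G.Adj d e) (h6 : G.Adj e f) (h7 : G.Adj w f) :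
    ∃ (r : V) (cy : G.Walk r r), cy.IsCycle ∧ cy.length = 9 ∧
      u ∈ cy.support ∧ w ∈ cy.support := by
  by_cases hxa : x = a
  · subst hxa
    exact (h7c (mkC7 h2 h3 h4 h5 h6 h7.symm hwx hac had hae haf hbd hbe hbf hbw
      hce hcf hcw hdf hdw hew)).elim
  by_cases hxb : x = b
  · subst hxb; exact ((htri a).2.2.2 ⟨h2.symm, h1⟩).elim
  by_cases hxc : x = c
  · subst hxc
    exact (h5c (mkC5 h4 h5 h6 h7.symm hwx hce hcf hdf hdw hew)).elim
  by_cases hxd : x = d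
  · subst hxd
    exact (h5c (mkC5 h1 h2 h3 h4 hxu (Ne.symm hbu) (Ne.symm hcu) hac had hbd)).elim
  by_cases hxe : x = e
  · subst hxe; exact ((htri f).2.2.1 ⟨h7, h6⟩).elim
  by_cases hxf : x = f
  · subst hxf
    exact (h7c (mkC7 h1 h2 h3 h4 h5 h6 hxu (Ne.symm hbu) (Ne.symm hcu) (Ne.symm hdu)
      (Ne.symm heu) hac had hae haf hbd hbe hbf hce hcf hdf)).elim
  refine ⟨u, .cons h1 (.cons h2 (.cons h3 (.cons h4 (.cons h5 (.cons h6
    (.cons h7.symm (.cons hwx (.cons hxu .nil)))))))), ?_, rfl, ?_, ?_⟩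
  · simp [SimpleGraph.Walk.isCycle_def, SimpleGraph.Walk.isTrail_def, List.Nodup, Sym2.eq_iff]
    aesop
  · simp
  · simp

end IdentAux



/-- Let G be a plane graph with no 5-cycles, no 7-cycles and
no adjacent triangles, and let uvwx be a 4-cycle none of whose edges lies in a
triangle. The graph H obtained from G by identifying the diagonal vertices u
and w has no adjacent triangles, every 5-cycle of H corresponds to a 7-cycle of
G, and every 7-cycle of H corresponds to a 9-cycle of G through both u and w. -/
theorem identification_of_diagonal_vertices_of_4cycle
    (P : PlaneGraph)
    (h5 : ¬ P.G.HasCycleLength 5) (h7 : ¬ P.G.HasCycleLength 7)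
    (hT : P.G.NoAdjacentTriangles)
    {u v w x : P.V}
    (huv : P.G.Adj u v) (hvw : P.G.Adj v w) (hwx : P.G.Adj w x) (hxu : P.G.Adj x u)
    (huw : u ≠ w) (hvx : v ≠ x)
    (htri : ∀ t : P.V,
      ¬ (P.G.Adj u t ∧ P.G.Adj v t) ∧ ¬ (P.G.Adj v t ∧ P.G.Adj w t) ∧
      ¬ (P.G.Adj w t ∧ P.G.Adj x t) ∧ ¬ (P.G.Adj x t ∧ P.G.Adj u t)) :
    (P.G.identify u w).NoAdjacentTriangles ∧
    ((P.G.identify u w).HasCycleLength 5 → P.G.HasCycleLength 7) ∧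
    ((P.G.identify u w).HasCycleLength 7 →
      ∃ (a : P.V) (c : P.G.Walk a a), c.IsCycle ∧ c.length = 9 ∧
        u ∈ c.support ∧ w ∈ c.support) := by
  have key1 := fun {a b : P.V} => IdentAux.keyL1 h5 huv hvw hwx hxu huw htri (a := a) (b := b)
  refine ⟨?_, ?_, ?_⟩
  · -- no adjacent triangles
    intro a b c d h₁ h₂ h₃ h₄ h₅
    have haw := IdentAux.ne_w_left huw h₁
    have hbw := IdentAux.ne_w_right huw h₁
    have hcw := IdentAux.ne_w_right huw h₂
    have hdw := IdentAux.ne_w_right huw h₄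
    by_cases hau : a = u
    · rw [hau] at h₁ h₂ h₄
      have hbu : b ≠ u := h₁.ne'
      have hcu : c ≠ u := h₂.ne'
      have hdu : d ≠ u := h₄.ne'
      have hbc : P.G.Adj b c := IdentAux.adj_of_ne huw h₃ hbu hcu
      have hbd : P.G.Adj b d := IdentAux.adj_of_ne huw h₅ hbu hdu
      rcases IdentAux.adj_left huw h₁ hbu with hb | hb <;>
        rcases IdentAux.adj_left huw h₂ hcu with hc | hc <;>
          rcases IdentAux.adj_left huw h₄ hdu with hd | hd
      · exact hT u b c d hb hc hbc hd hbd
      · exact (key1 hbu hbw hdu hdw hb hbd hd).elim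
      · exact (key1 hbu hbw hcu hcw hb hbc hc).elim
      · exact (key1 hbu hbw hcu hcw hb hbc hc).elim
      · exact (key1 hcu hcw hbu hbw hc hbc.symm hb).elim
      · exact (key1 hcu hcw hbu hbw hc hbc.symm hb).elim
      · exact (key1 hdu hdw hbu hbw hd hbd.symm hb).elim
      · exact hT w b c d hb hc hbc hd hbd
    by_cases hbu : b = u
    · rw [hbu] at h₁ h₃ h₅
      have hcu : c ≠ u := h₃.ne'
      have hdu : d ≠ u := h₅.ne'
      have hac : P.G.Adj a c := IdentAux.adj_of_ne huw h₂ hau hcu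
      have had : P.G.Adj a d := IdentAux.adj_of_ne huw h₄ hau hdu
      rcases IdentAux.adj_left huw h₁.symm hau with ha | ha <;>
        rcases IdentAux.adj_left huw h₃ hcu with hc | hc <;>
          rcases IdentAux.adj_left huw h₅ hdu with hd | hd
      · exact hT u a c d ha hc hac hd had
      · exact (key1 hau haw hdu hdw ha had hd).elim
      · exact (key1 hau haw hcu hcw ha hac hc).elim
      · exact (key1 hau haw hcu hcw ha hac hc).elim
      · exact (key1 hcu hcw hau haw hc hac.symm ha).elim
      · exact (key1 hcu hcw hau haw hc hac.symm ha).elim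
      · exact (key1 hdu hdw hau haw hd had.symm ha).elim
      · exact hT w a c d ha hc hac hd had
    by_cases hcu : c = u
    · by_cases hdu : d = u
      · exact hcu.trans hdu.symm
      rw [hcu] at h₂ h₃
      have hab : P.G.Adj a b := IdentAux.adj_of_ne huw h₁ hau hbu
      have had : P.G.Adj a d := IdentAux.adj_of_ne huw h₄ hau hdu
      have hbd : P.G.Adj b d := IdentAux.adj_of_ne huw h₅ hbu hdu
      rcases IdentAux.adj_left huw h₂.symm hau with ha | ha <;>
        rcases IdentAux.adj_left huw h₃.symm hbu with hb | hb
      · exact hcu.trans (hT a b u d hab ha.symm hb.symm had hbd)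
      · exact (key1 hau haw hbu hbw ha hab hb).elim
      · exact (key1 hbu hbw hau haw hb hab.symm ha).elim
      · exact absurd (hT a b w d hab ha.symm hb.symm had hbd) (Ne.symm hdw)
    by_cases hdu : d = u
    · rw [hdu] at h₄ h₅
      have hab : P.G.Adj a b := IdentAux.adj_of_ne huw h₁ hau hbu
      have hac : P.G.Adj a c := IdentAux.adj_of_ne huw h₂ hau hcu
      have hbc : P.G.Adj b c := IdentAux.adj_of_ne huw h₃ hbu hcu
      rcases IdentAux.adj_left huw h₄.symm hau with ha | ha <;>
        rcases IdentAux.adj_left huw h₅.symm hbu with hb | hb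
      · exact (hT a b c u hab hac hbc ha.symm hb.symm).trans hdu.symm
      · exact (key1 hau haw hbu hbw ha hab hb).elim
      · exact (key1 hbu hbw hau haw hb hab.symm ha).elim
      · exact absurd (hT a b c w hab hac hbc ha.symm hb.symm) hcw
    · exact hT a b c d (IdentAux.adj_of_ne huw h₁ hau hbu)
        (IdentAux.adj_of_ne huw h₂ hau hcu) (IdentAux.adj_of_ne huw h₃ hbu hcu)
        (IdentAux.adj_of_ne huw h₄ hau hdu) (IdentAux.adj_of_ne huw h₅ hbu hdu)
  · -- 5-cycles of H
    rintro ⟨r, c, hc, hl⟩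
    exfalso
    by_cases hu : u ∈ c.support
    · obtain ⟨a, b, d, e, hs⟩ := IdentAux.walk_decomp5 (c.rotate u hu)
        ((IdentAux.length_rotate c hu).trans hl)
      have hchain := (c.rotate u hu).isChain_adj_support
      have hnd := (hc.rotate hu).support_nodup
      rw [hs] at hchain hnd
      simp only [List.isChain_cons_cons, List.isChain_singleton, and_true] at hchain
      obtain ⟨e1, e2, e3, e4, e5⟩ := hchain
      simp only [List.tail_cons, List.nodup_cons, List.mem_cons, List.mem_singleton, not_or,
        List.not_mem_nil, or_false, List.nodup_nil, and_true] at hnd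
      obtain ⟨⟨hab, had, hae, hau⟩, ⟨hbd, hbe, hbu⟩, ⟨hde, hdu⟩, heu, -⟩ := hnd
      have haw := IdentAux.ne_w_right huw e1
      have hbw := IdentAux.ne_w_right huw e2
      have hdw := IdentAux.ne_w_right huw e3
      have hew := IdentAux.ne_w_right huw e4
      have gab := IdentAux.adj_of_ne huw e2 hau hbu
      have gbd := IdentAux.adj_of_ne huw e3 hbu hdu
      have gde := IdentAux.adj_of_ne huw e4 hdu heu
      rcases IdentAux.adj_left huw e1 hau with g1 | g1 <;>
        rcases IdentAux.adj_left huw e5.symm heu with g2 | g2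
      · exact h5 (IdentAux.mkC5 g1 gab gbd gde g2.symm (Ne.symm hbu) (Ne.symm hdu)
          had hae hbe)
      · exact IdentAux.keyL2 h5 h7 huv hvw hwx hxu huw htri hau haw
          hbu hbw hdu hdw heu hew had hae hbe
          g1 gab gbd gde g2
      · exact IdentAux.keyL2 h5 h7 huv hvw hwx hxu huw htri heu hew
          hdu hdw hbu hbw hau haw (Ne.symm hbe)
          (Ne.symm hae) (Ne.symm had) g2 gde.symm gbd.symm gab.symm g1
      · exact h5 (IdentAux.mkC5 g1 gab gbd gde g2.symm (Ne.symm hbw) (Ne.symm hdw)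
          had hae hbe)
    · obtain ⟨a, b, d, e, hs⟩ := IdentAux.walk_decomp5 c hl
      have hne : ∀ y ∈ c.support, y ≠ u := fun y hy h => hu (h ▸ hy)
      have hru : r ≠ u := hne r (by rw [hs]; simp)
      have hau : a ≠ u := hne a (by rw [hs]; simp)
      have hbu : b ≠ u := hne b (by rw [hs]; simp)
      have hdu : d ≠ u := hne d (by rw [hs]; simp)
      have heu : e ≠ u := hne e (by rw [hs]; simp)
      have hchain := c.isChain_adj_support
      have hnd := hc.support_nodup
      rw [hs] at hchain hnd
      simp only [List.isChain_cons_cons, List.isChain_singleton, and_true] at hchain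
      obtain ⟨e1, e2, e3, e4, e5⟩ := hchain
      simp only [List.tail_cons, List.nodup_cons, List.mem_cons, List.mem_singleton, not_or,
        List.not_mem_nil, or_false, List.nodup_nil, and_true] at hnd
      obtain ⟨⟨hab, had, hae, har⟩, ⟨hbd, hbe, hbr⟩, ⟨hde, hdr⟩, her, -⟩ := hnd
      exact h5 (IdentAux.mkC5 (IdentAux.adj_of_ne huw e1 hru hau)
        (IdentAux.adj_of_ne huw e2 hau hbu) (IdentAux.adj_of_ne huw e3 hbu hdu)
        (IdentAux.adj_of_ne huw e4 hdu heu) (IdentAux.adj_of_ne huw e5 heu hru)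
        (Ne.symm hbr) (Ne.symm hdr) had hae hbe)
  · -- 7-cycles of H
    rintro ⟨r, c, hc, hl⟩
    by_cases hu : u ∈ c.support
    · obtain ⟨a, b, d, e, f, g, hs⟩ := IdentAux.walk_decomp7 (c.rotate u hu)
        ((IdentAux.length_rotate c hu).trans hl)
      have hchain := (c.rotate u hu).isChain_adj_support
      have hnd := (hc.rotate hu).support_nodup
      rw [hs] at hchain hnd
      simp only [List.isChain_cons_cons, List.isChain_singleton, and_true] at hchain
      obtain ⟨e1, e2, e3, e4, e5, e6, e7⟩ := hchain
      simp only [List.tail_cons, List.nodup_cons, List.mem_cons, List.mem_singleton, not_or,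
        List.not_mem_nil, or_false, List.nodup_nil, and_true] at hnd
      obtain ⟨⟨hab, had, hae, haf, hag, hau⟩, ⟨hbd, hbe, hbf, hbg, hbu⟩,
        ⟨hde, hdf, hdg, hdu⟩, ⟨hef, heg, heu⟩, ⟨hfg, hfu⟩, hgu, -⟩ := hnd
      have haw := IdentAux.ne_w_right huw e1
      have hbw := IdentAux.ne_w_right huw e2
      have hdw := IdentAux.ne_w_right huw e3
      have hew := IdentAux.ne_w_right huw e4
      have hfw := IdentAux.ne_w_right huw e5
      have hgw := IdentAux.ne_w_right huw e6
      have gab := IdentAux.adj_of_ne huw e2 hau hbu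
      have gbd := IdentAux.adj_of_ne huw e3 hbu hdu
      have gde := IdentAux.adj_of_ne huw e4 hdu heu
      have gef := IdentAux.adj_of_ne huw e5 heu hfu
      have gfg := IdentAux.adj_of_ne huw e6 hfu hgu
      rcases IdentAux.adj_left huw e1 hau with g1 | g1 <;>
        rcases IdentAux.adj_left huw e7.symm hgu with g2 | g2
      · exact (h7 (IdentAux.mkC7 g1 gab gbd gde gef gfg g2.symm (Ne.symm hbu)
          (Ne.symm hdu) (Ne.symm heu) (Ne.symm hfu) had hae haf hag hbe hbf hbg
          hdf hdg heg)).elim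
      · exact IdentAux.keyL3 h5 h7 huv hvw hwx hxu huw htri hau haw
          hbu hbw hdu hdw heu hew hfu hfw
          hgu hgw had hae haf hag hbe hbf hbg hdf hdg heg
          g1 gab gbd gde gef gfg g2
      · exact IdentAux.keyL3 h5 h7 huv hvw hwx hxu huw htri hgu hgw
          hfu hfw heu hew hdu hdw hbu hbw
          hau haw (Ne.symm heg) (Ne.symm hdg) (Ne.symm hbg)
          (Ne.symm hag) (Ne.symm hdf) (Ne.symm hbf) (Ne.symm haf) (Ne.symm hbe)
          (Ne.symm hae) (Ne.symm had)
          g2 gfg.symm gef.symm gde.symm gbd.symm gab.symm g1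
      · exact (h7 (IdentAux.mkC7 g1 gab gbd gde gef gfg g2.symm (Ne.symm hbw)
          (Ne.symm hdw) (Ne.symm hew) (Ne.symm hfw) had hae haf hag hbe hbf hbg
          hdf hdg heg)).elim
    · obtain ⟨a, b, d, e, f, g, hs⟩ := IdentAux.walk_decomp7 c hl
      have hne : ∀ y ∈ c.support, y ≠ u := fun y hy h => hu (h ▸ hy)
      have hru : r ≠ u := hne r (by rw [hs]; simp)
      have hau : a ≠ u := hne a (by rw [hs]; simp)
      have hbu : b ≠ u := hne b (by rw [hs]; simp)
      have hdu : d ≠ u := hne d (by rw [hs]; simp)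
      have heu : e ≠ u := hne e (by rw [hs]; simp)
      have hfu : f ≠ u := hne f (by rw [hs]; simp)
      have hgu : g ≠ u := hne g (by rw [hs]; simp)
      have hchain := c.isChain_adj_support
      have hnd := hc.support_nodup
      rw [hs] at hchain hnd
      simp only [List.isChain_cons_cons, List.isChain_singleton, and_true] at hchain
      obtain ⟨e1, e2, e3, e4, e5, e6, e7⟩ := hchain
      simp only [List.tail_cons, List.nodup_cons, List.mem_cons, List.mem_singleton, not_or,
        List.not_mem_nil, or_false, List.nodup_nil, and_true] at hnd
      obtain ⟨⟨hab, had, hae, haf, hag, har⟩, ⟨hbd, hbe, hbf, hbg, hbr⟩,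
        ⟨hde, hdf, hdg, hdr⟩, ⟨hef, heg, her⟩, ⟨hfg, hfr⟩, hgr, -⟩ := hnd
      exact (h7 (IdentAux.mkC7 (IdentAux.adj_of_ne huw e1 hru hau)
        (IdentAux.adj_of_ne huw e2 hau hbu) (IdentAux.adj_of_ne huw e3 hbu hdu)
        (IdentAux.adj_of_ne huw e4 hdu heu) (IdentAux.adj_of_ne huw e5 heu hfu)
        (IdentAux.adj_of_ne huw e6 hfu hgu) (IdentAux.adj_of_ne huw e7 hgu hru)
        (Ne.symm hbr) (Ne.symm hdr) (Ne.symm her) (Ne.symm hfr) had hae haf hag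
        hbe hbf hbg hdf hdg heg)).elim
end

section
/- Let C be a chordless 11-cycle in a graph G with no adjacent triangles, no 4-cycles, no 5-cycles, and no 7-cycles. Suppose two adjacent vertices a, b not on C together have four neighbors on C: a is adjacent to a_1, a_2 ∈ C and b to b_1, b_2 ∈ C, all four distinct and in clockwise order a_1, a_2, b_1, b_2. If a_1a_2 is an edge of C, then the arcs C(a_2, b_1) and C(b_2, a_1) each contain at least 4 internal vertices, forcing |C| ≥ 12; hence this configuration cannot occur on an 11-cycle. -/
open SimpleGraph

section ArcHelpers

open Fin.CommRing

variable {V : Type} {G : SimpleGraph V}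

def arcWalk (G : SimpleGraph V) (g : Fin 11 → V)
    (hadj : ∀ i, G.Adj (g i) (g (i + 1))) (i : Fin 11) :
    (k : ℕ) → G.Walk (g i) (g (i + (k : Fin 11)))
  | 0 => Walk.nil.copy rfl (by norm_num)
  | (k+1) => ((arcWalk G g hadj i k).concat (hadj (i + k))).copy rfl
      (by congr 1; push_cast; ring)

lemma support_arcWalk (g : Fin 11 → V) (hadj : ∀ i, G.Adj (g i) (g (i + 1)))
    (i : Fin 11) (k : ℕ) :
    (arcWalk G g hadj i k).support = (List.range (k+1)).map (fun j : ℕ => g (i + j)) := by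
  induction k with
  | zero => simp [arcWalk, List.range_succ, List.range_zero]
  | succ k ih =>
      simp [arcWalk, Walk.support_concat, ih, List.range_succ, List.concat_eq_append,
        add_assoc]

lemma length_arcWalk (g : Fin 11 → V) (hadj : ∀ i, G.Adj (g i) (g (i + 1)))
    (i : Fin 11) (k : ℕ) : (arcWalk G g hadj i k).length = k := by
  induction k with
  | zero => simp [arcWalk]
  | succ k ih => simp [arcWalk, Walk.length_concat, ih]

lemma arc_cycle (g : Fin 11 → V) (hinj : Function.Injective g)
    (hadj : ∀ i, G.Adj (g i) (g (i + 1)))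
    {a b : V} (ha : ∀ j, a ≠ g j) (hb : ∀ j, b ≠ g j) (hab : G.Adj a b)
    (i : Fin 11) (k : ℕ) (hk : k ≤ 10)
    (ha' : G.Adj a (g i)) (hb' : G.Adj b (g (i + (k : Fin 11)))) :
    G.HasCycleLength (k + 3) := by
  classical
  set q : G.Walk (g (i + (k : Fin 11))) (g i) := (arcWalk G g hadj i k).reverse with hq
  set p : G.Walk b a := Walk.cons hb' (q.concat ha'.symm) with hp
  refine ⟨a, Walk.cons hab p, ?_, ?_⟩
  · rw [Walk.cons_isCycle_iff]
    have hsupq : q.support = ((List.range (k+1)).map (fun j : ℕ => g (i + j))).reverse := by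
      rw [hq, Walk.support_reverse, support_arcWalk]
    constructor
    · rw [Walk.isPath_def, hp]
      simp only [Walk.support_cons, Walk.support_concat, hsupq, List.concat_eq_append]
      rw [List.nodup_cons]
      constructor
      · simp only [List.mem_append, List.mem_reverse, List.mem_map, List.mem_range,
          List.mem_singleton]
        rintro (⟨j, _, hj⟩ | rfl)
        · exact hb _ hj.symm
        · exact hab.ne rfl
      · rw [List.nodup_append]
        refine ⟨?_, List.nodup_singleton a, ?_⟩
        · rw [List.nodup_reverse]
          refine List.Nodup.map_on ?_ List.nodup_range
          intro x hx y hy hxy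
          simp only [List.mem_range] at hx hy
          have := hinj hxy
          have h2 : (x : Fin 11) = (y : Fin 11) := by
            exact add_left_cancel this
          have := congrArg Fin.val h2
          simp only [Fin.val_natCast] at this
          omega
        · intro x hx
          simp only [List.mem_reverse, List.mem_map, List.mem_range] at hx
          obtain ⟨j, _, rfl⟩ := hx
          simp only [List.mem_singleton]
          rintro _ rfl h
          exact ha _ h.symm
    · intro hmem
      rw [hp] at hmem
      simp only [Walk.edges_cons, Walk.edges_concat, List.concat_eq_append,
        List.mem_cons, List.mem_append, List.mem_singleton] at hmem
      rcases hmem with h | h | h | h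
      · rw [Sym2.eq_iff] at h
        rcases h with ⟨h1, -⟩ | ⟨h1, -⟩
        · exact hab.ne h1
        · exact ha _ h1
      · have hmem2 := Walk.fst_mem_support_of_mem_edges q h
        rw [hsupq] at hmem2
        simp only [List.mem_reverse, List.mem_map, List.mem_range] at hmem2
        obtain ⟨j, -, hj⟩ := hmem2
        exact ha _ hj.symm
      · rw [Sym2.eq_iff] at h
        rcases h with h | h
        · exact ha _ h.1
        · exact hb _ h.2
      · simp at h
  · simp [hp, hq, Walk.length_concat, length_arcWalk]

end ArcHelpers

open Fin.CommRing in
/-- Let C be a chordless 11-cycle (given as `g : Fin 11 → V`)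
in a graph with no adjacent triangles and no 4-, 5- and 7-cycles. There is no
pair of adjacent vertices a, b off C with a adjacent to a₁ = g i₁, a₂ = g i₂
and b adjacent to b₁ = g i₃, b₂ = g i₄, all four distinct and in clockwise
order, with a₁a₂ an edge of C: the arcs C(a₂, b₁) and C(b₂, a₁) would each have
at least 4 internal vertices, forcing |C| ≥ 12. -/
theorem dclaw_with_consecutive_pair_contradiction
    {V : Type} (G : SimpleGraph V)
    (hT : G.NoAdjacentTriangles)
    (h4 : ¬ G.HasCycleLength 4) (h5 : ¬ G.HasCycleLength 5)
    (h7 : ¬ G.HasCycleLength 7)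
    (g : Fin 11 → V) (hinj : Function.Injective g)
    (hadj : ∀ i, G.Adj (g i) (g (i + 1)))
    (hchordless : ∀ i j, G.Adj (g i) (g j) → j = i + 1 ∨ i = j + 1)
    {a b : V} (ha : ∀ i, a ≠ g i) (hb : ∀ i, b ≠ g i) (hab : G.Adj a b)
    (i₁ i₂ i₃ i₄ : Fin 11)
    (hdist : [i₁, i₂, i₃, i₄].Nodup)
    (horder : (i₂ - i₁).val + (i₃ - i₂).val + (i₄ - i₃).val + (i₁ - i₄).val = 11)
    (ha₁ : G.Adj a (g i₁)) (ha₂ : G.Adj a (g i₂))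
    (hb₁ : G.Adj b (g i₃)) (hb₂ : G.Adj b (g i₄))
    (hedge : i₂ = i₁ + 1) :
    False := by
  classical
  simp only [List.nodup_cons, List.mem_cons, List.not_mem_nil, or_false,
    List.nodup_nil, and_true, not_or] at hdist
  obtain ⟨⟨h12, h13, h14⟩, ⟨h23, h24⟩, h34, -⟩ := hdist
  have valzero : ∀ x y : Fin 11, (x - y).val = 0 → x = y := by
    intro x y h
    have : x - y = 0 := Fin.ext h
    exact sub_eq_zero.mp this
  set d := (i₃ - i₂).val with hd
  set e := (i₄ - i₃).val with he
  set f := (i₁ - i₄).val with hf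
  have hd1 : (i₂ - i₁).val = 1 := by rw [hedge]; simp
  have hi3 : i₃ = i₂ + (d : Fin 11) := by rw [hd, Fin.cast_val_eq_self]; ring
  have hi1 : i₁ = i₄ + (f : Fin 11) := by rw [hf, Fin.cast_val_eq_self]; ring
  have hdlt : d < 11 := (i₃ - i₂).isLt
  have hflt : f < 11 := (i₁ - i₄).isLt
  have h1110 : (1 : Fin 11) + ((10 : ℕ) : Fin 11) = 0 := by decide
  have hd10 : d ≠ 10 := by
    intro h
    apply h13
    rw [hi3, h, hedge, add_assoc, h1110, add_zero]
  have hf10 : f ≠ 10 := by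
    intro h
    apply h24
    rw [hedge, hi1, h, add_assoc, add_comm ((10:ℕ):Fin 11) 1, h1110, add_zero]
  have hd0 : d ≠ 0 := fun h => h23 (valzero _ _ h).symm
  have hf0 : f ≠ 0 := fun h => h14 (valzero _ _ h)
  have he0 : e ≠ 0 := fun h => h34 (valzero _ _ h).symm
  have key : ∀ n, G.HasCycleLength n → n ≠ 4 ∧ n ≠ 5 ∧ n ≠ 7 := by
    intro n hn
    refine ⟨?_, ?_, ?_⟩ <;> rintro rfl
    · exact h4 hn
    · exact h5 hn
    · exact h7 hn
  have cA := key _ (arc_cycle g hinj hadj ha hb hab i₂ d (by omega) ha₂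
    (by rw [← hi3]; exact hb₁))
  have cB := key _ (arc_cycle g hinj hadj ha hb hab i₁ (d + 1) (by omega) ha₁
    (by rw [show i₁ + ((d + 1 : ℕ) : Fin 11) = i₃ by rw [hi3, hedge]; push_cast; ring]
        exact hb₁))
  have cA' := key _ (arc_cycle g hinj hadj hb ha hab.symm i₄ f (by omega) hb₂
    (by rw [← hi1]; exact ha₁))
  have cB' := key _ (arc_cycle g hinj hadj hb ha hab.symm i₄ (f + 1) (by omega) hb₂
    (by rw [show i₄ + ((f + 1 : ℕ) : Fin 11) = i₂ by rw [hedge, hi1]; push_cast; ring]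
        exact ha₂))
  omega
end

section
/- Let G be a graph with no 4-cycles and no 6-cycle through a fixed vertex configuration, and let C be a chordless 11-cycle. If a vertex z off C has exactly two neighbors y_2, y_3 on C with y_2 y_3 ∈ E(C), and another vertex y adjacent to z has exactly two neighbors y_1, y_4 on C, all four neighbors distinct, then the absence of 4-, 5-, and 7-cycles forces the three arcs of C between consecutive neighbor-vertices (other than the edge y_2y_3) to contain at least 4, 4, and 1 internal vertices respectively in some order, and hence |C| ≥ 12; so no such adjacent pair (a 'd-claw-center') exists for an 11-cycle. -/
open SimpleGraph

open Fin.NatCast Fin.CommRing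

private lemma walk_along {V : Type} (G : SimpleGraph V) (g : Fin 11 → V)
    (hadj : ∀ i, G.Adj (g i) (g (i + 1))) :
    ∀ (k : ℕ) (i : Fin 11), ∃ w : G.Walk (g i) (g (i + (k : Fin 11))),
      w.length = k ∧ w.support = (List.range (k+1)).map (fun t : ℕ => g (i + (t : Fin 11))) := by
  intro k
  induction k with
  | zero =>
    intro i
    refine ⟨(SimpleGraph.Walk.nil).copy rfl (by simp), ?_, ?_⟩ <;> simp [List.range_succ]
  | succ k ih =>
    intro i
    obtain ⟨w, hl, hs⟩ := ih (i + 1)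
    have he : g (i + 1 + (k : Fin 11)) = g (i + ((k+1 : ℕ) : Fin 11)) := by
      congr 1; push_cast; ring
    refine ⟨(SimpleGraph.Walk.cons (hadj i) w).copy rfl he, by simp [hl], ?_⟩
    simp only [SimpleGraph.Walk.support_copy, SimpleGraph.Walk.support_cons, hs]
    conv_rhs => rw [List.range_succ_eq_map, List.map_cons, List.map_map]
    refine List.cons_eq_cons.mpr ⟨by simp, ?_⟩
    apply List.map_congr_left
    intro t _
    simp only [Function.comp_apply]
    congr 1
    push_cast [Nat.succ_eq_add_one]
    ring

private lemma key_cycle {V : Type} (G : SimpleGraph V)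
    (h4 : ¬ G.HasCycleLength 4) (h5 : ¬ G.HasCycleLength 5)
    (h7 : ¬ G.HasCycleLength 7)
    (g : Fin 11 → V) (hinj : Function.Injective g)
    (hadj : ∀ i, G.Adj (g i) (g (i + 1)))
    {u v : V} (hu : ∀ i, u ≠ g i) (hv : ∀ i, v ≠ g i) (huv : G.Adj u v)
    (s t : Fin 11) (hvs : G.Adj v (g s)) (hut : G.Adj u (g t)) :
    (t - s).val ≠ 1 ∧ (t - s).val ≠ 2 ∧ (t - s).val ≠ 4 := by
  set d : ℕ := (t - s).val with hd
  obtain ⟨w, hl, hs'⟩ := walk_along G g hadj d s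
  have hend : g (s + (d : Fin 11)) = g t := by
    congr 1; rw [hd, Fin.cast_val_eq_self]; ring
  let w' : G.Walk (g s) (g t) := w.copy rfl hend
  have hw'l : w'.length = d := by simp [w', hl]
  have hw's : w'.support = (List.range (d+1)).map (fun t' : ℕ => g (s + (t' : Fin 11))) := by
    simp [w', hs']
  have hd11 : d < 11 := (t - s).is_lt
  have hnodup : w'.support.Nodup := by
    rw [hw's]
    refine List.Nodup.map_on ?_ List.nodup_range
    intro a ha b hb hab
    simp only [List.mem_range] at ha hb
    have h3 : (a : Fin 11) = (b : Fin 11) := add_left_cancel (hinj hab)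
    have h4 := congrArg Fin.val h3
    simp only [Fin.val_natCast] at h4
    omega
  have hmem : ∀ x ∈ w'.support, ∃ j, x = g j := by
    intro x hx
    rw [hw's] at hx
    simp only [List.mem_map] at hx
    obtain ⟨a, _, ha⟩ := hx
    exact ⟨_, ha.symm⟩
  let p1 : G.Walk (g s) u := w'.concat hut.symm
  let p2 : G.Walk v u := SimpleGraph.Walk.cons hvs p1
  have hp1s : p1.support = w'.support.concat u := by
    simp [p1, SimpleGraph.Walk.support_concat]
  have hunotin : u ∉ w'.support := fun h => by
    obtain ⟨j, hj⟩ := hmem u h; exact hu j hj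
  have hvnotin : v ∉ p1.support := by
    rw [hp1s, List.concat_eq_append, List.mem_append]
    rintro (h | h)
    · obtain ⟨j, hj⟩ := hmem v h; exact hv j hj
    · exact huv.ne' (by simpa using h)
  have hp2 : p2.IsPath := by
    rw [SimpleGraph.Walk.isPath_def]
    simp only [p2, SimpleGraph.Walk.support_cons, List.nodup_cons]
    refine ⟨hvnotin, ?_⟩
    rw [hp1s, List.concat_eq_append, List.nodup_append]
    exact ⟨hnodup, List.nodup_singleton u, by simpa using fun a ha (hau : a = u) => hunotin (hau ▸ ha)⟩
  have hedge : s(u, v) ∉ p2.edges := by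
    simp only [p2, SimpleGraph.Walk.edges_cons, List.mem_cons]
    rintro (h | h)
    · rw [Sym2.eq_iff] at h
      rcases h with ⟨h1, h2⟩ | ⟨h1, h2⟩
      · exact huv.ne h1
      · exact hu s h1
    · exact hvnotin (SimpleGraph.Walk.snd_mem_support_of_mem_edges _ h)
  let c : G.Walk u u := SimpleGraph.Walk.cons huv p2
  have hcyc : c.IsCycle := (SimpleGraph.Walk.cons_isCycle_iff p2 huv).mpr ⟨hp2, hedge⟩
  have hclen : c.length = d + 3 := by
    simp [c, p2, p1, SimpleGraph.Walk.length_concat, hw'l]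
  refine ⟨?_, ?_, ?_⟩ <;> intro h
  · exact h4 ⟨u, c, hcyc, by rw [hclen, h]⟩
  · exact h5 ⟨u, c, hcyc, by rw [hclen, h]⟩
  · exact h7 ⟨u, c, hcyc, by rw [hclen, h]⟩


set_option maxHeartbeats 1000000 in
/-- Let C be a chordless 11-cycle (given as `g : Fin 11 → V`)
in a graph with no 4-, 5- and 7-cycles and no adjacent triangles. There is no
"d-claw-center": no pair of adjacent vertices z, y off C such that z has exactly
the two neighbors g i₂, g i₃ on C with g i₂ g i₃ ∈ E(C), and y has exactly the
two neighbors g i₁, g i₄ on C, all four distinct — the arcs of C between the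
neighbors would force |C| ≥ 12. -/
theorem no_dclaw_center_on_11cycle
    {V : Type} (G : SimpleGraph V)
    (h4 : ¬ G.HasCycleLength 4) (h5 : ¬ G.HasCycleLength 5)
    (h7 : ¬ G.HasCycleLength 7) (hT : G.NoAdjacentTriangles)
    (g : Fin 11 → V) (hinj : Function.Injective g)
    (hadj : ∀ i, G.Adj (g i) (g (i + 1)))
    (hchordless : ∀ i j, G.Adj (g i) (g j) → j = i + 1 ∨ i = j + 1)
    {z y : V} (hz : ∀ i, z ≠ g i) (hy : ∀ i, y ≠ g i) (hzy : G.Adj z y)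
    (i₁ i₂ i₃ i₄ : Fin 11)
    (hdist : [i₁, i₂, i₃, i₄].Nodup)
    (hznbrs : ∀ i, G.Adj z (g i) ↔ i = i₂ ∨ i = i₃)
    (hedge : i₃ = i₂ + 1)
    (hynbrs : ∀ i, G.Adj y (g i) ↔ i = i₁ ∨ i = i₄) :
    False := by
  have hzi₂ : G.Adj z (g i₂) := (hznbrs i₂).mpr (Or.inl rfl)
  have hzi₃ : G.Adj z (g i₃) := (hznbrs i₃).mpr (Or.inr rfl)
  have hyi₁ : G.Adj y (g i₁) := (hynbrs i₁).mpr (Or.inl rfl)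
  have hyi₄ : G.Adj y (g i₄) := (hynbrs i₄).mpr (Or.inr rfl)
  have A1 := key_cycle G h4 h5 h7 g hinj hadj hz hy hzy i₁ i₂ hyi₁ hzi₂
  have A2 := key_cycle G h4 h5 h7 g hinj hadj hz hy hzy i₁ i₃ hyi₁ hzi₃
  have A3 := key_cycle G h4 h5 h7 g hinj hadj hz hy hzy i₄ i₂ hyi₄ hzi₂
  have A4 := key_cycle G h4 h5 h7 g hinj hadj hz hy hzy i₄ i₃ hyi₄ hzi₃
  have B1 := key_cycle G h4 h5 h7 g hinj hadj hy hz hzy.symm i₂ i₁ hzi₂ hyi₁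
  have B2 := key_cycle G h4 h5 h7 g hinj hadj hy hz hzy.symm i₃ i₁ hzi₃ hyi₁
  have B3 := key_cycle G h4 h5 h7 g hinj hadj hy hz hzy.symm i₂ i₄ hzi₂ hyi₄
  have B4 := key_cycle G h4 h5 h7 g hinj hadj hy hz hzy.symm i₃ i₄ hzi₃ hyi₄
  have hsub : ∀ a b : Fin 11, (a - b).val = (a.val + 11 - b.val) % 11 := fun a b => by
    rw [Fin.sub_def]; simp; omega
  simp only [hsub] at A1 A2 A3 A4 B1 B2 B3 B4
  have h3v : i₃.val = (i₂.val + 1) % 11 := by simp [hedge, Fin.add_def]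
  simp only [List.nodup_cons, List.mem_cons, List.not_mem_nil] at hdist
  have h14' : i₁ ≠ i₄ := fun h => hdist.1 (Or.inr (Or.inr (Or.inl h)))
  have h14 : i₁.val ≠ i₄.val := fun h => h14' (Fin.val_injective h)
  have l1 := i₁.is_lt
  have l2 := i₂.is_lt
  have l3 := i₃.is_lt
  have l4 := i₄.is_lt
  obtain ⟨A1a, A1b, A1c⟩ := A1
  obtain ⟨A2a, A2b, A2c⟩ := A2
  obtain ⟨A3a, A3b, A3c⟩ := A3
  obtain ⟨A4a, A4b, A4c⟩ := A4
  obtain ⟨B1a, B1b, B1c⟩ := B1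
  obtain ⟨B2a, B2b, B2c⟩ := B2
  obtain ⟨B3a, B3b, B3c⟩ := B3
  obtain ⟨B4a, B4b, B4c⟩ := B4
  omega
end
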